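/- The function 𝔑_h satisfies Watts's fifth-order differential equation on (0,1): for every x ∈ (0,1), the third derivative at x of the function y ↦ (y(1−y))^{4/3} · (d/dy)[ (y(1−y))^{2/3} · 𝔑_h′(y) ] equals 0. -/

import Mathlib

open scoped BigOperators

/-- Rising factorial (Pochhammer symbol) `(x)_k = x(x+1)⋯(x+k-1)`. -/
noncomputable def pochR (x : ℝ) (k : ℕ) : ℝ := ∏ i ∈ Finset.range k, (x + i)

/-- The Gauss hypergeometric series `₂F₁(a,b;c;z)`. -/
noncomputable def F21R (a b c z : ℝ) : ℝ :=
  ∑' k : ℕ, pochR a k * pochR b k / (pochR c k * (Nat.factorial k : ℝ)) * z ^ k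

/-- The generalized hypergeometric series `₃F₂(a₁,a₂,a₃;b₁,b₂;z)`. -/
noncomputable def F32R (a₁ a₂ a₃ b₁ b₂ z : ℝ) : ℝ :=
  ∑' k : ℕ, pochR a₁ k * pochR a₂ k * pochR a₃ k /
      (pochR b₁ k * pochR b₂ k * (Nat.factorial k : ℝ)) * z ^ k

/-- Cardy's horizontal crossing function `𝔓_h`. -/
noncomputable def Ph (z : ℝ) : ℝ :=
  3 * Real.Gamma (2/3) / (Real.Gamma (1/3)) ^ 2 * z ^ ((1:ℝ)/3) *
    F21R (1/3) (2/3) (4/3) z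

/-- Watts's horizontal-vertical crossing function `𝔓_hv`. -/
noncomputable def Phv (z : ℝ) : ℝ :=
  Ph z - Real.sqrt 3 / (2 * Real.pi) * z * F32R 1 1 (4/3) 2 (5/3) z

/-- Cardy's cluster-number function `𝔑_h`. -/
noncomputable def Nh (z : ℝ) : ℝ :=
  1/2 - Real.sqrt 3 / (4 * Real.pi) *
    (Real.log (1 - z) + (1 - z) * F32R 1 1 (4/3) 2 (5/3) (1 - z))




section WattsAux
open Set


lemma pochR_succ (x : ℝ) (k : ℕ) : pochR x (k+1) = pochR x k * (x + k) :=
  Finset.prod_range_succ _ _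

lemma pochR_pos {x : ℝ} (hx : 0 < x) (k : ℕ) : 0 < pochR x k :=
  Finset.prod_pos fun i _ => by positivity

lemma pochR_one (k : ℕ) : pochR 1 k = (Nat.factorial k : ℝ) := by
  induction k with
  | zero => simp [pochR]
  | succ n ih => rw [pochR_succ, ih, Nat.factorial_succ]; push_cast; ring

lemma pochR_two (k : ℕ) : pochR 2 k = (Nat.factorial (k+1) : ℝ) := by
  induction k with
  | zero => simp [pochR]
  | succ n ih => rw [pochR_succ, ih, Nat.factorial_succ (n+1)]; push_cast; ring

noncomputable def rr (k : ℕ) : ℝ := pochR (4/3) k / pochR (5/3) k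

lemma rr_pos (k : ℕ) : 0 < rr k := div_pos (pochR_pos (by norm_num) k) (pochR_pos (by norm_num) k)

lemma rr_zero : rr 0 = 1 := by simp [rr, pochR]

lemma rr_le_one (k : ℕ) : rr k ≤ 1 := by
  rw [rr, div_le_one (pochR_pos (by norm_num) k)]
  refine Finset.prod_le_prod (fun i _ => by positivity) (fun i _ => by norm_num)

lemma rr_rec (k : ℕ) : (3*(k:ℝ)+5) * rr (k+1) = (3*(k:ℝ)+4) * rr k := by
  have h5 : (0:ℝ) < pochR (5/3) k := pochR_pos (by norm_num) k
  have h5k : (5/3 + (k:ℝ)) ≠ 0 := by positivity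
  rw [rr, rr, pochR_succ, pochR_succ]
  field_simp
  ring


lemma slin {r : ℝ} (h0 : 0 ≤ r) (h1 : r < 1) : Summable (fun k : ℕ => ((k:ℝ)+1) * r^k) := by
  have h := summable_pow_mul_geometric_of_norm_lt_one (R := ℝ) 1
    (by rwa [Real.norm_eq_abs, abs_of_nonneg h0])
  simpa [add_mul, pow_one] using h.add (summable_geometric_of_lt_one h0 h1)

noncomputable def phiF (w : ℝ) : ℝ := ∑' k : ℕ, rr k / ((k:ℝ)+1) * w^(k+1)
noncomputable def SS (w : ℝ) : ℝ := ∑' k : ℕ, rr k * w^k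
noncomputable def DS (w : ℝ) : ℝ := ∑' k : ℕ, ((k:ℝ)+1) * rr (k+1) * w^k

lemma rr_abs_term_le {w : ℝ} (k : ℕ) (hw : |w| ≤ 1) : ‖rr k * w ^ k‖ ≤ |w|^k := by
  rw [Real.norm_eq_abs, abs_mul, abs_of_pos (rr_pos k), abs_pow]
  exact mul_le_of_le_one_left (by positivity) (rr_le_one k)

lemma hasDerivAt_phiF {w : ℝ} (hw : w ∈ Ioo (0:ℝ) 1) : HasDerivAt phiF (SS w) w := by
  obtain ⟨hw0, hw1⟩ := hw
  set ρ : ℝ := (1 + w)/2 with hρ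
  have hρ0 : 0 < ρ := by positivity
  have hρ1 : ρ < 1 := by simp only [hρ]; linarith
  have hwρ : w ∈ Ioo (-ρ) ρ := ⟨by linarith, by simp only [hρ]; linarith⟩
  have key := hasDerivAt_tsum_of_isPreconnected
    (u := fun k : ℕ => ρ^k)
    (g := fun k y => rr k / ((k:ℝ)+1) * y^(k+1))
    (g' := fun k y => rr k * y^k)
    (t := Ioo (-ρ) ρ) (y₀ := 0)
    (summable_geometric_of_lt_one hρ0.le hρ1) isOpen_Ioo isPreconnected_Ioo
    (fun n y _ => ?_) (fun n y hy => ?_) ⟨by linarith, hρ0⟩ ?_ hwρ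
  · exact key
  · have h := (hasDerivAt_pow (n+1) y).const_mul (rr n / ((n:ℝ)+1))
    have hn : ((n:ℝ)+1) ≠ 0 := by positivity
    refine h.congr_deriv (Eq.symm ?_)
    push_cast
    field_simp
  · have hy' : |y| ≤ ρ := by
      rw [abs_le]; exact ⟨hy.1.le, hy.2.le⟩
    calc ‖rr n * y ^ n‖ = rr n * |y|^n := by
          rw [Real.norm_eq_abs, abs_mul, abs_of_pos (rr_pos n), abs_pow]
      _ ≤ 1 * ρ^n := by
          exact mul_le_mul (rr_le_one n) (pow_le_pow_left₀ (abs_nonneg y) hy' n)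
            (by positivity) zero_le_one
      _ = ρ^n := one_mul _
  · have : (fun k : ℕ => rr k / ((k:ℝ)+1) * (0:ℝ)^(k+1)) = fun _ => (0:ℝ) := by
      funext k; simp
    rw [this]
    exact summable_zero

lemma summable_deriv_terms {ρ : ℝ} (h0 : 0 ≤ ρ) (h1 : ρ < 1) :
    Summable (fun n : ℕ => (n:ℝ) * ρ^(n-1)) := by
  apply (summable_nat_add_iff 1).1
  apply (slin h0 h1).congr
  intro n
  push_cast
  simp

lemma hasDerivAt_SS {w : ℝ} (hw : w ∈ Ioo (0:ℝ) 1) : HasDerivAt SS (DS w) w := by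
  obtain ⟨hw0, hw1⟩ := hw
  set ρ : ℝ := (1 + w)/2 with hρ
  have hρ0 : 0 < ρ := by positivity
  have hρ1 : ρ < 1 := by simp only [hρ]; linarith
  have hwρ : w ∈ Ioo (-ρ) ρ := ⟨by linarith, by simp only [hρ]; linarith⟩
  have bnd : ∀ (n : ℕ) (y : ℝ), y ∈ Ioo (-ρ) ρ → ‖rr n * ((n:ℝ) * y^(n-1))‖ ≤ (n:ℝ) * ρ^(n-1) := by
    intro n y hy
    have hy' : |y| ≤ ρ := by rw [abs_le]; exact ⟨hy.1.le, hy.2.le⟩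
    calc ‖rr n * ((n:ℝ) * y^(n-1))‖ = rr n * ((n:ℝ) * |y|^(n-1)) := by
          rw [Real.norm_eq_abs, abs_mul, abs_mul, abs_of_pos (rr_pos n), abs_pow,
            Nat.abs_cast]
      _ ≤ 1 * ((n:ℝ) * ρ^(n-1)) := by
          refine mul_le_mul (rr_le_one n) ?_ (by positivity) zero_le_one
          exact mul_le_mul_of_nonneg_left (pow_le_pow_left₀ (abs_nonneg y) hy' _) (by positivity)
      _ = (n:ℝ) * ρ^(n-1) := one_mul _
  have key := hasDerivAt_tsum_of_isPreconnected
    (u := fun n : ℕ => (n:ℝ) * ρ^(n-1))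
    (g := fun n y => rr n * y^n)
    (g' := fun n y => rr n * ((n:ℝ) * y^(n-1)))
    (t := Ioo (-ρ) ρ) (y₀ := w)
    (summable_deriv_terms hρ0.le hρ1) isOpen_Ioo isPreconnected_Ioo
    (fun n y _ => (hasDerivAt_pow n y).const_mul (rr n)) bnd hwρ ?_ hwρ
  · have hsum : Summable (fun n : ℕ => rr n * ((n:ℝ) * w^(n-1))) := by
      apply Summable.of_norm_bounded (summable_deriv_terms hρ0.le hρ1)
      exact fun n => bnd n w hwρ
    have : (∑' n : ℕ, rr n * ((n:ℝ) * w^(n-1))) = DS w := by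
      rw [Summable.tsum_eq_zero_add hsum]
      simp only [Nat.cast_zero, zero_mul, mul_zero, zero_add]
      unfold DS
      apply tsum_congr
      intro k
      push_cast
      ring_nf
    rw [this] at key
    exact key
  · apply Summable.of_norm_bounded (summable_geometric_of_lt_one hρ0.le hρ1)
    intro n
    have hw' : |w| ≤ ρ := by rw [abs_le]; exact ⟨hwρ.1.le, hwρ.2.le⟩
    calc ‖rr n * w ^ n‖ = rr n * |w|^n := by
          rw [Real.norm_eq_abs, abs_mul, abs_of_pos (rr_pos n), abs_pow]
      _ ≤ 1 * ρ^n := mul_le_mul (rr_le_one n) (pow_le_pow_left₀ (abs_nonneg w) hw' n)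
          (by positivity) zero_le_one
      _ = ρ^n := one_mul _


lemma SS_summable {w : ℝ} (h0 : 0 ≤ w) (h1 : w < 1) : Summable (fun k : ℕ => rr k * w^k) := by
  apply Summable.of_norm_bounded (summable_geometric_of_lt_one h0 h1)
  intro n
  rw [Real.norm_eq_abs, abs_mul, abs_of_pos (rr_pos n), abs_pow, abs_of_nonneg h0]
  exact mul_le_of_le_one_left (by positivity) (rr_le_one n)

lemma DS_summable {w : ℝ} (h0 : 0 ≤ w) (h1 : w < 1) :
    Summable (fun k : ℕ => ((k:ℝ)+1) * rr (k+1) * w^k) := by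
  apply Summable.of_norm_bounded (slin h0 h1)
  intro n
  rw [Real.norm_eq_abs, abs_mul, abs_mul, abs_of_pos (rr_pos (n+1)), abs_pow,
    abs_of_nonneg h0, abs_of_nonneg (by positivity : (0:ℝ) ≤ (n:ℝ)+1)]
  calc ((n:ℝ)+1) * rr (n+1) * w^n ≤ ((n:ℝ)+1) * 1 * w^n := by
        gcongr
        exact rr_le_one (n+1)
    _ = ((n:ℝ)+1) * w^n := by ring

lemma SS_ode {w : ℝ} (hw : w ∈ Ioo (0:ℝ) 1) :
    3*w*(1-w) * DS w = (4*w-2) * SS w + 2 := by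
  obtain ⟨hw0, hw1⟩ := hw
  -- telescoping sum
  set c : ℕ → ℝ := fun k => 2 * rr k * w^k + 3*(k:ℝ) * rr k * w^(k+1) with hc
  set term : ℕ → ℝ := fun k =>
    3*w*(1-w) * (((k:ℝ)+1) * rr (k+1) * w^k) - (4*w-2) * (rr k * w^k) with hterm
  have htele : ∀ k, term k = c k - c (k+1) := by
    intro k
    have hrec := rr_rec k
    simp only [hterm, hc]
    push_cast
    linear_combination (w^(k+1)) * hrec
  have hDSsum := DS_summable hw0.le hw1
  have hSSsum := SS_summable hw0.le hw1
  have hterm_sum : Summable term := by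
    simpa only [hterm] using (hDSsum.mul_left (3*w*(1-w))).sub (hSSsum.mul_left (4*w-2))
  -- partial sums telescope
  have hpartial : ∀ n, ∑ i ∈ Finset.range n, term i = c 0 - c n := by
    intro n
    calc ∑ i ∈ Finset.range n, term i = ∑ i ∈ Finset.range n, (c i - c (i+1)) :=
          Finset.sum_congr rfl (fun i _ => htele i)
      _ = c 0 - c n := Finset.sum_range_sub' c n
  have hc0 : c 0 = 2 := by simp [hc, rr_zero]
  have hczero : Filter.Tendsto c Filter.atTop (nhds 0) := by
    apply squeeze_zero_norm (a := fun n : ℕ => 5*((n:ℝ)+1) * w^n)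
    · intro n
      have h1' : 2 * rr n * w^n ≤ 2 * w^n := by
        nlinarith [rr_le_one n, rr_pos n, pow_nonneg hw0.le n]
      have hpow : w^(n+1) ≤ w^n := by
        rw [pow_succ]
        nlinarith [pow_nonneg hw0.le n]
      have h2' : 3*(n:ℝ) * rr n * w^(n+1) ≤ 3*(n:ℝ) * w^n := by
        have hmm : rr n * w^(n+1) ≤ 1 * w^n :=
          mul_le_mul (rr_le_one n) hpow (by positivity) zero_le_one
        have := mul_le_mul_of_nonneg_left hmm (by positivity : (0:ℝ) ≤ 3*(n:ℝ))
        nlinarith [this]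
      have hnn : 0 ≤ c n := by
        simp only [hc]
        have := (rr_pos n).le
        have h1 := pow_nonneg hw0.le n
        have h2 := pow_nonneg hw0.le (n+1)
        positivity
      rw [Real.norm_eq_abs, abs_of_nonneg hnn]
      simp only [hc]
      nlinarith [pow_nonneg hw0.le n]
    · have := ((slin hw0.le hw1).mul_left 5).tendsto_atTop_zero
      simpa [mul_assoc] using this
  have hlim : Filter.Tendsto (fun n => ∑ i ∈ Finset.range n, term i) Filter.atTop (nhds 2) := by
    simp only [hpartial, hc0]
    simpa using Filter.Tendsto.const_sub 2 hczero
  have htsum : ∑' k, term k = 2 :=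
    tendsto_nhds_unique hterm_sum.hasSum.tendsto_sum_nat hlim
  have hexpand : ∑' k, term k = 3*w*(1-w) * DS w - (4*w-2) * SS w := by
    simp only [hterm]
    rw [Summable.tsum_sub (hDSsum.mul_left (3*w*(1-w))) (hSSsum.mul_left (4*w-2)),
      tsum_mul_left, tsum_mul_left, DS, SS]
  rw [hexpand] at htsum
  linarith

lemma aa_eq (k : ℕ) :
    pochR 1 k * pochR 1 k * pochR (4/3) k / (pochR 2 k * pochR (5/3) k * (Nat.factorial k : ℝ))
      = rr k / ((k:ℝ)+1) := by
  have h5 : (0:ℝ) < pochR (5/3) k := pochR_pos (by norm_num) k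
  have hf : ((Nat.factorial k : ℕ) : ℝ) ≠ 0 := Nat.cast_ne_zero.2 (Nat.factorial_ne_zero k)
  have hk1 : ((k:ℝ)+1) ≠ 0 := by positivity
  rw [pochR_one, pochR_two, rr, Nat.factorial_succ]
  push_cast
  field_simp

lemma Nh_eq : Nh = fun z => 1/2 - Real.sqrt 3 / (4 * Real.pi) *
    (Real.log (1 - z) + phiF (1 - z)) := by
  funext z
  unfold Nh
  congr 2
  unfold F32R phiF
  rw [← tsum_mul_left]
  congr 1
  apply tsum_congr
  intro k
  rw [aa_eq k, pow_succ]
  ring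


noncomputable def cst : ℝ := Real.sqrt 3 / (4 * Real.pi)

lemma hasDerivAt_Nh {t : ℝ} (ht : t ∈ Ioo (0:ℝ) 1) :
    HasDerivAt Nh (cst * (1/(1-t) + SS (1-t))) t := by
  obtain ⟨ht0, ht1⟩ := ht
  have h1t : (1:ℝ) - t ∈ Ioo (0:ℝ) 1 := ⟨by linarith, by linarith⟩
  have hlin : HasDerivAt (fun z : ℝ => 1 - z) (-1) t := by
    simpa using (hasDerivAt_id t).const_sub 1
  have hlog : HasDerivAt (fun z : ℝ => Real.log (1 - z)) (-(1/(1-t))) t := by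
    have := (Real.hasDerivAt_log (by linarith : (1:ℝ) - t ≠ 0)).comp t hlin
    refine this.congr_deriv (Eq.symm ?_)
    field_simp
  have hphi : HasDerivAt (fun z : ℝ => phiF (1 - z)) (-(SS (1-t))) t := by
    have := (hasDerivAt_phiF h1t).comp t hlin
    refine this.congr_deriv (Eq.symm ?_)
    ring
  rw [Nh_eq]
  have := ((hlog.add hphi).const_mul (cst)).const_sub (1/2)
  refine this.congr_deriv (Eq.symm ?_)
  unfold cst
  ring

lemma deriv_Nh {t : ℝ} (ht : t ∈ Ioo (0:ℝ) 1) :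
    deriv Nh t = cst * (1/(1-t) + SS (1-t)) := (hasDerivAt_Nh ht).deriv

noncomputable def UU (t : ℝ) : ℝ := (t * (1 - t)) ^ ((2:ℝ)/3) * (cst * (1/(1-t) + SS (1-t)))

noncomputable def VV (y : ℝ) : ℝ :=
  (2/3 * (y*(1-y)) ^ (-(1:ℝ)/3) * (1 - 2*y)) * (cst * (1/(1-y) + SS (1-y)))
    + (y*(1-y)) ^ ((2:ℝ)/3) * (cst * (1/(1-y)^2 - DS (1-y)))

lemma hasDerivAt_UU {y : ℝ} (hy : y ∈ Ioo (0:ℝ) 1) : HasDerivAt UU (VV y) y := by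
  obtain ⟨hy0, hy1⟩ := hy
  have h1y : (1:ℝ) - y ∈ Ioo (0:ℝ) 1 := ⟨by linarith, by linarith⟩
  have hq : 0 < y * (1 - y) := by nlinarith
  have hlin : HasDerivAt (fun t : ℝ => 1 - t) (-1) y := by
    simpa using (hasDerivAt_id y).const_sub 1
  have hprod : HasDerivAt (fun t : ℝ => t * (1 - t)) (1 - 2*y) y := by
    have := (hasDerivAt_id y).mul hlin
    simp only [id_eq] at this
    refine this.congr_deriv (Eq.symm ?_)
    ring
  have hrpow : HasDerivAt (fun t : ℝ => (t * (1 - t)) ^ ((2:ℝ)/3))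
      (2/3 * (y*(1-y)) ^ (-(1:ℝ)/3) * (1 - 2*y)) y := by
    have h := (Real.hasDerivAt_rpow_const (x := y*(1-y)) (p := 2/3) (Or.inl hq.ne')).comp y hprod
    refine h.congr_deriv (Eq.symm ?_)
    norm_num
  have hinv : HasDerivAt (fun t : ℝ => 1/(1-t)) (1/(1-y)^2) y := by
    have h2 := hlin.inv (by linarith : (1:ℝ) - y ≠ 0)
    have hval : (- -1 / ((1:ℝ)-y)^2) = 1/(1-y)^2 := by ring
    rw [hval] at h2
    simp only [one_div] at h2 ⊢
    exact h2
  have hSS : HasDerivAt (fun t : ℝ => SS (1 - t)) (-(DS (1-y))) y := by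
    have := (hasDerivAt_SS h1y).comp y hlin
    refine this.congr_deriv (Eq.symm ?_)
    ring
  have hg : HasDerivAt (fun t : ℝ => cst * (1/(1-t) + SS (1-t)))
      (cst * (1/(1-y)^2 - DS (1-y))) y := by
    have := (hinv.add hSS).const_mul cst
    refine this.congr_deriv (Eq.symm ?_)
    all_goals ring
  have := hrpow.mul hg
  refine this.congr_deriv (Eq.symm ?_)
  all_goals (unfold VV; ring)

lemma VV_algebra {y : ℝ} (hy : y ∈ Ioo (0:ℝ) 1) :
    (y * (1 - y)) ^ ((4:ℝ)/3) * VV y = cst/3 * y^2 := by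
  obtain ⟨hy0, hy1⟩ := hy
  have h1y : (1:ℝ) - y ∈ Ioo (0:ℝ) 1 := ⟨by linarith, by linarith⟩
  have hq : 0 < y * (1 - y) := by nlinarith
  have h1y0 : ((1:ℝ) - y) ≠ 0 := by linarith
  have hab : (y*(1-y))^((4:ℝ)/3) * (y*(1-y))^(-(1:ℝ)/3) = y*(1-y) := by
    rw [← Real.rpow_add hq]
    norm_num
  have hac : (y*(1-y))^((4:ℝ)/3) * (y*(1-y))^((2:ℝ)/3) = (y*(1-y))^2 := by
    have h2 : (4:ℝ)/3 + 2/3 = ((2:ℕ):ℝ) := by norm_num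
    rw [← Real.rpow_add hq, h2, Real.rpow_natCast]
  have e1 : (y*(1-y)) * (1/(1-y)) = y := by field_simp
  have e2 : (y*(1-y))^2 * (1/(1-y)^2) = y^2 := by field_simp
  have e3 : 3*(1-y)*y*DS (1-y) = (2-4*y)*SS (1-y) + 2 := by
    have h := SS_ode h1y
    have hsimp : (1:ℝ) - (1 - y) = y := by ring
    rw [hsimp] at h
    linarith
  unfold VV
  linear_combination
    ((2:ℝ)/3*(1-2*y)*cst*(1/(1-y)+SS (1-y))) * hab
    + (cst*(1/(1-y)^2 - DS (1-y))) * hac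
    + ((2:ℝ)/3*(1-2*y)*cst) * e1
    + cst * e2
    - (cst*y*(1-y)/3) * e3

lemma iteratedDeriv_congr_nhds {f g : ℝ → ℝ} {x : ℝ} (h : f =ᶠ[nhds x] g) (n : ℕ) :
    iteratedDeriv n f x = iteratedDeriv n g x := by
  have H : ∀ m : ℕ, iteratedDeriv m f =ᶠ[nhds x] iteratedDeriv m g := by
    intro m
    induction m with
    | zero => simpa [iteratedDeriv_zero] using h
    | succ m ih => simpa only [iteratedDeriv_succ] using ih.deriv
  exact (H n).eq_of_nhds

lemma iteratedDeriv_three_quad (a : ℝ) (x : ℝ) :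
    iteratedDeriv 3 (fun y : ℝ => a * y^2) x = 0 := by
  have d1 : deriv (fun y : ℝ => a * y^2) = fun y => a * (2*y) := by
    funext y
    have := (hasDerivAt_pow 2 y).const_mul a
    rw [this.deriv]
    norm_num
  have d2 : deriv (fun y : ℝ => a * (2*y)) = fun _ => a * 2 := by
    funext y
    have h0 : HasDerivAt (fun y : ℝ => a * (2*y)) (a * 2) y := by
      have := ((hasDerivAt_id y).const_mul (2:ℝ)).const_mul a
      simpa using this
    exact h0.deriv
  rw [iteratedDeriv_eq_iterate]
  simp only [Function.iterate_succ, Function.iterate_zero, Function.comp_apply, id_eq,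
    Function.comp]
  rw [d1, d2]
  simp

/-- `𝔑_h` satisfies Watts's fifth-order differential equation on `(0,1)`. -/
theorem stmt6 (x : ℝ) (hx : x ∈ Set.Ioo (0:ℝ) 1) :
    iteratedDeriv 3
      (fun y => (y * (1 - y)) ^ ((4:ℝ)/3) *
        deriv (fun t => (t * (1 - t)) ^ ((2:ℝ)/3) * deriv Nh t) y) x = 0 := by
  have hinner : Set.EqOn (fun t => (t * (1 - t)) ^ ((2:ℝ)/3) * deriv Nh t) UU (Ioo 0 1) := by
    intro t ht
    simp only [UU]
    rw [deriv_Nh ht]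
  have houter : Set.EqOn
      (fun y => (y * (1 - y)) ^ ((4:ℝ)/3) *
        deriv (fun t => (t * (1 - t)) ^ ((2:ℝ)/3) * deriv Nh t) y)
      (fun y => cst/3 * y^2) (Ioo 0 1) := by
    intro y hy
    have hev : (fun t => (t * (1 - t)) ^ ((2:ℝ)/3) * deriv Nh t) =ᶠ[nhds y] UU :=
      Filter.eventuallyEq_of_mem (isOpen_Ioo.mem_nhds hy) hinner
    simp only
    rw [hev.deriv_eq, (hasDerivAt_UU hy).deriv, VV_algebra hy]
  have hev2 : (fun y => (y * (1 - y)) ^ ((4:ℝ)/3) *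
        deriv (fun t => (t * (1 - t)) ^ ((2:ℝ)/3) * deriv Nh t) y)
      =ᶠ[nhds x] (fun y => cst/3 * y^2) :=
    Filter.eventuallyEq_of_mem (isOpen_Ioo.mem_nhds hx) houter
  rw [iteratedDeriv_congr_nhds hev2 3]
  exact iteratedDeriv_three_quad (cst/3) x

end WattsAux
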